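/- Let f = a₀ + a₁x + ⋯ + aₙxⁿ ∈ ℤ[x] be a primitive polynomial such that each complex zero θ of f satisfies |θ| > d, where a₀ = ±pᵏ·d for positive integers k, d and a prime p not dividing d. Suppose j ∈ {1,…,n} satisfies gcd(k,j) = 1, pᵏ divides gcd(a₀, a₁, …, a_{j−1}), and, in case k > 1, p does not divide aⱼ. Then f is irreducible in ℤ[x]. -/

import Mathlib

open Polynomial Finset

section Aux

variable {p : ℕ} [hp : Fact p.Prime]

set_option linter.unusedSectionVars false
set_option linter.unusedVariables false



variable {p : ℕ} [hp : Fact p.Prime]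

lemma val_eq_of_dvd_not_dvd {c : ℤ} {e : ℕ} (h1 : (p:ℤ)^e ∣ c) (h2 : ¬ (p:ℤ)^(e+1) ∣ c) :
    c ≠ 0 ∧ padicValInt p c = e := by
  have hc : c ≠ 0 := by rintro rfl; exact h2 (dvd_zero _)
  refine ⟨hc, le_antisymm ?_ ?_⟩
  · by_contra hlt
    exact h2 (((padicValInt_dvd_iff (e+1) c)).2 (Or.inr (by omega)))
  · rcases (padicValInt_dvd_iff e c).1 h1 with h | h
    · exact absurd h hc
    · exact h

lemma prod_coeff_val {k j : ℕ} (g h : Polynomial ℤ)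
    {Wg Lg Wh Lh : ℕ}
    (hg1 : g.coeff Lg ≠ 0) (hg2 : j * padicValInt p (g.coeff Lg) + Lg * k = Wg)
    (hg3 : ∀ l, g.coeff l ≠ 0 → Wg ≤ j * padicValInt p (g.coeff l) + l * k)
    (hg4 : ∀ l, Lg < l → g.coeff l ≠ 0 → Wg + 1 ≤ j * padicValInt p (g.coeff l) + l * k)
    (hh1 : h.coeff Lh ≠ 0) (hh2 : j * padicValInt p (h.coeff Lh) + Lh * k = Wh)
    (hh3 : ∀ l, h.coeff l ≠ 0 → Wh ≤ j * padicValInt p (h.coeff l) + l * k)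
    (hh4 : ∀ l, Lh < l → h.coeff l ≠ 0 → Wh + 1 ≤ j * padicValInt p (h.coeff l) + l * k) :
    (g * h).coeff (Lg + Lh) ≠ 0 ∧
      j * padicValInt p ((g * h).coeff (Lg + Lh)) + (Lg + Lh) * k = Wg + Wh := by
  classical
  set e : ℕ := padicValInt p (g.coeff Lg) + padicValInt p (h.coeff Lh) with he
  have hea : j * e = j * padicValInt p (g.coeff Lg) + j * padicValInt p (h.coeff Lh) :=
    Nat.mul_add _ _ _
  have hmain_ne : g.coeff Lg * h.coeff Lh ≠ 0 := mul_ne_zero hg1 hh1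
  have hmain_val : padicValInt p (g.coeff Lg * h.coeff Lh) = e := padicValInt.mul hg1 hh1
  have hmain_dvd : (p:ℤ)^e ∣ g.coeff Lg * h.coeff Lh := by
    rw [← hmain_val]; exact padicValInt_dvd _
  have hmain_ndvd : ¬ (p:ℤ)^(e+1) ∣ g.coeff Lg * h.coeff Lh := by
    intro hc
    rcases (padicValInt_dvd_iff (e+1) _).1 hc with hc | hc
    · exact hmain_ne hc
    · omega
  have hmem : (Lg, Lh) ∈ Finset.HasAntidiagonal.antidiagonal (Lg + Lh) := by
    simp [Finset.HasAntidiagonal.mem_antidiagonal]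
  have hrest : (p:ℤ)^(e+1) ∣
      ∑ x ∈ (Finset.HasAntidiagonal.antidiagonal (Lg + Lh)).erase (Lg, Lh), g.coeff x.1 * h.coeff x.2 := by
    refine Finset.dvd_sum ?_
    rintro ⟨l, m⟩ hx
    have hxne := Finset.ne_of_mem_erase hx
    have hxsum : l + m = Lg + Lh := by
      have := Finset.mem_of_mem_erase hx
      rwa [Finset.HasAntidiagonal.mem_antidiagonal] at this
    by_cases hgl : g.coeff l = 0
    · simp [hgl]
    by_cases hhm : h.coeff m = 0
    · simp [hhm]
    have hkey : e + 1 ≤ padicValInt p (g.coeff l) + padicValInt p (h.coeff m) := by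
      have hcase : Lg < l ∨ Lh < m := by
        rcases Nat.lt_or_ge Lg l with h' | h'
        · exact Or.inl h'
        rcases Nat.lt_or_ge Lh m with h'' | h''
        · exact Or.inr h''
        · exfalso; apply hxne
          have : l = Lg ∧ m = Lh := by omega
          simp [this.1, this.2]
      have hge : Wg + Wh + 1 ≤ j * padicValInt p (g.coeff l) + l * k
          + (j * padicValInt p (h.coeff m) + m * k) := by
        rcases hcase with h' | h'
        · have := hg4 l h' hgl
          have := hh3 m hhm
          omega
        · have := hg3 l hgl
          have := hh4 m h' hhm
          omega
      have hlm : l * k + m * k = Lg * k + Lh * k := by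
        rw [← Nat.add_mul, ← Nat.add_mul, hxsum]
      by_contra hcon
      have hle : padicValInt p (g.coeff l) + padicValInt p (h.coeff m) ≤ e := by omega
      have h2 := Nat.mul_le_mul_left j hle
      have hma : j * (padicValInt p (g.coeff l) + padicValInt p (h.coeff m))
          = j * padicValInt p (g.coeff l) + j * padicValInt p (h.coeff m) := Nat.mul_add _ _ _
      omega
    calc (p:ℤ)^(e+1) ∣ (p:ℤ)^(padicValInt p (g.coeff l) + padicValInt p (h.coeff m)) :=
          pow_dvd_pow _ hkey
      _ ∣ g.coeff l * h.coeff m := by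
          rw [pow_add]; exact mul_dvd_mul (padicValInt_dvd _) (padicValInt_dvd _)
  have hsum : (g * h).coeff (Lg + Lh) = g.coeff Lg * h.coeff Lh +
      ∑ x ∈ (Finset.HasAntidiagonal.antidiagonal (Lg + Lh)).erase (Lg, Lh), g.coeff x.1 * h.coeff x.2 := by
    rw [Polynomial.coeff_mul, ← Finset.add_sum_erase _ _ hmem]
  have hdvd_e : (p:ℤ)^e ∣ (g * h).coeff (Lg + Lh) := by
    rw [hsum]
    exact dvd_add hmain_dvd ((pow_dvd_pow _ (Nat.le_succ e)).trans hrest)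
  have hndvd : ¬ (p:ℤ)^(e+1) ∣ (g * h).coeff (Lg + Lh) := by
    intro hc
    apply hmain_ndvd
    have : g.coeff Lg * h.coeff Lh = (g * h).coeff (Lg + Lh) -
        ∑ x ∈ (Finset.HasAntidiagonal.antidiagonal (Lg + Lh)).erase (Lg, Lh), g.coeff x.1 * h.coeff x.2 := by
      rw [hsum]; ring
    rw [this]
    exact dvd_sub hc hrest
  obtain ⟨hne, hval⟩ := val_eq_of_dvd_not_dvd hdvd_e hndvd
  refine ⟨hne, ?_⟩
  rw [hval]
  have : (Lg + Lh) * k = Lg * k + Lh * k := Nat.add_mul _ _ _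
  omega

/-- Existence of min value and max attaining index for the weighted valuation. -/
lemma exists_WL (k j : ℕ) (g : Polynomial ℤ) (hg : g ≠ 0) :
    ∃ W L, g.coeff L ≠ 0 ∧ j * padicValInt p (g.coeff L) + L * k = W ∧
      (∀ l, g.coeff l ≠ 0 → W ≤ j * padicValInt p (g.coeff l) + l * k) ∧
      (∀ l, L < l → g.coeff l ≠ 0 → W + 1 ≤ j * padicValInt p (g.coeff l) + l * k) := by
  classical
  have hφ : ∀ φ : ℕ → ℕ, ∃ W L, L ∈ g.support ∧ φ L = W ∧
      (∀ l ∈ g.support, W ≤ φ l) ∧ (∀ l ∈ g.support, L < l → W + 1 ≤ φ l) := by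
    intro φ
    have hsupp : g.support.Nonempty := Polynomial.nonempty_support_iff.mpr hg
    obtain ⟨w, hwmem, hwmin⟩ : ∃ w ∈ g.support.image φ, ∀ x ∈ g.support.image φ, w ≤ x :=
      ⟨_, (g.support.image φ).min'_mem (hsupp.image φ), fun x hx => Finset.min'_le _ _ hx⟩
    have hT : (g.support.filter (fun l => φ l = w)).Nonempty := by
      obtain ⟨l, hl, hleq⟩ := Finset.mem_image.1 hwmem
      exact ⟨l, Finset.mem_filter.2 ⟨hl, hleq⟩⟩
    obtain ⟨L, hLmem, hLmax⟩ : ∃ L ∈ g.support.filter (fun l => φ l = w),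
        ∀ x ∈ g.support.filter (fun l => φ l = w), x ≤ L :=
      ⟨_, Finset.max'_mem _ hT, fun x hx => Finset.le_max' _ _ hx⟩
    rw [Finset.mem_filter] at hLmem
    refine ⟨w, L, hLmem.1, hLmem.2, fun l hl => hwmin _ (Finset.mem_image_of_mem φ hl), ?_⟩
    intro l hl hLl
    have h1 : w ≤ φ l := hwmin _ (Finset.mem_image_of_mem φ hl)
    rcases eq_or_lt_of_le h1 with h | h
    · exact absurd (hLmax l (Finset.mem_filter.2 ⟨hl, h.symm⟩)) (by omega)
    · omega
  obtain ⟨W, L, h1, h2, h3, h4⟩ := hφ (fun l => j * padicValInt p (g.coeff l) + l * k)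
  exact ⟨W, L, Polynomial.mem_support_iff.1 h1, h2,
    fun l hl => h3 l (Polynomial.mem_support_iff.2 hl),
    fun l hLl hl => h4 l (Polynomial.mem_support_iff.2 hl) hLl⟩

lemma stepC {k j : ℕ} (hk : 0 < k) (hj : 1 ≤ j) (hgcd : Nat.gcd k j = 1)
    (g h : Polynomial ℤ) (hg0 : g.coeff 0 ≠ 0) (hh0 : h.coeff 0 ≠ 0)
    (ha1 : 1 ≤ padicValInt p (g.coeff 0)) (hb1 : 1 ≤ padicValInt p (h.coeff 0))
    (hab : padicValInt p (g.coeff 0) + padicValInt p (h.coeff 0) = k)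
    (hdvd : ∀ i < j, (p:ℤ)^k ∣ (g * h).coeff i)
    (hvalj : ¬ (p:ℤ) ∣ (g * h).coeff j) : False := by
  classical
  set a := padicValInt p (g.coeff 0) with hadef
  set b := padicValInt p (h.coeff 0) with hbdef
  have hgne : g ≠ 0 := fun hc => hg0 (by simp [hc])
  have hhne : h ≠ 0 := fun hc => hh0 (by simp [hc])
  obtain ⟨Wg, Lg, hg1, hg2, hg3, hg4⟩ := exists_WL (p := p) k j g hgne
  obtain ⟨Wh, Lh, hh1, hh2, hh3, hh4⟩ := exists_WL (p := p) k j h hhne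
  obtain ⟨hfne, hfval⟩ := prod_coeff_val g h hg1 hg2 hg3 hg4 hh1 hh2 hh3 hh4
  have hWga : Wg ≤ j * a := by have := hg3 0 hg0; simpa using this
  have hWhb : Wh ≤ j * b := by have := hh3 0 hh0; simpa using this
  have hjk : j * k = j * a + j * b := by rw [← Nat.mul_add, hab]
  have hWsum_le : Wg + Wh ≤ j * k := by omega
  -- L = Lg + Lh
  have hLlej : Lg + Lh ≤ j := by
    by_contra hcon
    have : (Lg + Lh) * k ≥ (j + 1) * k := Nat.mul_le_mul_right k (by omega)
    have : (j+1) * k = j * k + k := Nat.succ_mul _ _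
    omega
  have hLcases : Lg + Lh = 0 ∨ Lg + Lh = j := by
    by_contra hcon
    push_neg at hcon
    have hlt : Lg + Lh < j := by omega
    have hpos : 0 < Lg + Lh := by omega
    have hd := hdvd (Lg + Lh) hlt
    have : k ≤ padicValInt p ((g*h).coeff (Lg+Lh)) := by
      rcases (padicValInt_dvd_iff k _).1 hd with hc | hc
      · exact absurd hc hfne
      · exact hc
    have h1 : j * k ≤ j * padicValInt p ((g*h).coeff (Lg+Lh)) := Nat.mul_le_mul_left j this
    have h2 : 0 < (Lg + Lh) * k := Nat.mul_pos hpos hk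
    omega
  rcases hLcases with hL0 | hLj
  · -- L = 0 : Lg = Lh = 0, Wg + Wh = j*k; derive p ∣ coeff j
    have hLg0 : Lg = 0 := by omega
    have hLh0 : Lh = 0 := by omega
    have hWsum : Wg + Wh = j * k := by
      -- ν (f 0) = a + b = k
      have hf0 : (g*h).coeff 0 = g.coeff 0 * h.coeff 0 := by
        simp [Polynomial.coeff_mul]
      have : padicValInt p ((g*h).coeff 0) = k := by
        rw [hf0, padicValInt.mul hg0 hh0, ← hadef, ← hbdef, hab]
      rw [hL0] at hfval
      simp only [Nat.zero_mul, Nat.add_zero] at hfval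
      rw [this] at hfval
      omega
    apply hvalj
    rw [Polynomial.coeff_mul]
    refine Finset.dvd_sum ?_
    rintro ⟨l, m⟩ hx
    rw [Finset.HasAntidiagonal.mem_antidiagonal] at hx
    by_cases hgl : g.coeff l = 0
    · simp [hgl]
    by_cases hhm : h.coeff m = 0
    · simp [hhm]
    have hlm : 0 < l ∨ 0 < m := by omega
    have hge : Wg + Wh + 1 ≤ j * padicValInt p (g.coeff l) + l * k
        + (j * padicValInt p (h.coeff m) + m * k) := by
      rcases hlm with h' | h'
      · have := hg4 l (by omega) hgl
        have := hh3 m hhm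
        omega
      · have := hg3 l hgl
        have := hh4 m (by omega) hhm
        omega
    have hlmk : l * k + m * k = j * k := by rw [← Nat.add_mul, hx]
    have hnu : 1 ≤ padicValInt p (g.coeff l) + padicValInt p (h.coeff m) := by
      by_contra hcon
      have h1 : padicValInt p (g.coeff l) = 0 ∧ padicValInt p (h.coeff m) = 0 := by omega
      rw [h1.1, h1.2] at hge
      omega
    calc (p:ℤ) ∣ (p:ℤ)^(padicValInt p (g.coeff l) + padicValInt p (h.coeff m)) :=
          dvd_pow_self _ (by omega)
      _ ∣ g.coeff l * h.coeff m := by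
          rw [pow_add]; exact mul_dvd_mul (padicValInt_dvd _) (padicValInt_dvd _)
  · -- L = j
    have hWsum : Wg + Wh = j * k := by
      rw [hLj] at hfval
      -- j * ν + j * k = Wg + Wh ≤ j * k  ⇒ ν = 0, sum = jk
      omega
    -- from hfval with hLj : j * ν(f_j) + j*k = j*k... fine
    have halpha : j * padicValInt p (g.coeff Lg) = 0 ∧ j * padicValInt p (h.coeff Lh) = 0 := by
      have h1 : Lg * k + Lh * k = j * k := by rw [← Nat.add_mul, hLj]
      omega
    have hWgLg : Wg = Lg * k := by omega
    have hWhLh : Wh = Lh * k := by omega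
    have hLgk : Lg * k = j * a := by
      have h1 : Lg * k + Lh * k = j * k := by rw [← Nat.add_mul, hLj]
      omega
    have hkdvd : k ∣ a := by
      have h1 : k ∣ a * j := ⟨Lg, by rw [Nat.mul_comm a j, ← hLgk, Nat.mul_comm]⟩
      exact (Nat.Coprime.dvd_of_dvd_mul_right (by rwa [Nat.Coprime]) h1)
    have : k ≤ a := Nat.le_of_dvd (by omega) hkdvd
    omega

end Aux


lemma multiset_prod_abs_lower (d : ℕ) (hd : 0 < d) (s : Multiset ℂ)
    (hs : ∀ z ∈ s, (d:ℝ) < ‖z‖) (hcard : 1 ≤ Multiset.card s) :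
    (d : ℝ) < ‖s.prod‖ := by
  have haux : ∀ t : Multiset ℂ, (∀ z ∈ t, (d:ℝ) < ‖z‖) →
      (1:ℝ) ≤ ‖t.prod‖ ∧ (0 < Multiset.card t → (d:ℝ) < ‖t.prod‖) := by
    intro t
    induction t using Multiset.induction with
    | empty => intro _; simp
    | cons a t ih =>
      intro ht
      have ha : (d:ℝ) < ‖a‖ := ht a (Multiset.mem_cons_self _ _)
      have ht' : ∀ z ∈ t, (d:ℝ) < ‖z‖ := fun z hz => ht z (Multiset.mem_cons_of_mem hz)
      obtain ⟨ih1, _⟩ := ih ht'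
      have hd1 : (1:ℝ) ≤ d := by exact_mod_cast hd
      have habs : ‖(a ::ₘ t).prod‖ = ‖a‖ * ‖t.prod‖ := by
        rw [Multiset.prod_cons, norm_mul]
      constructor
      · rw [habs]
        nlinarith
      · intro _
        rw [habs]
        nlinarith
  exact (haux s hs).2 (by omega)

lemma stepA (d : ℕ) (hd : 0 < d) (f g : Polynomial ℤ) (hf : f ≠ 0) (hgf : g ∣ f)
    (hdeg : 1 ≤ g.natDegree)
    (hroots : ∀ θ : ℂ, Polynomial.aeval θ f = 0 → (d : ℝ) < ‖θ‖) :
    d < (g.coeff 0).natAbs := by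
  have hgne : g ≠ 0 := fun hc => hf (by simpa [hc] using hgf)
  set G := g.map (Int.castRingHom ℂ) with hG
  have hGne : G ≠ 0 := by
    rw [hG, Ne, Polynomial.map_eq_zero_iff (f := Int.castRingHom ℂ) Int.cast_injective]
    exact hgne
  have hsplits : G.Splits := IsAlgClosed.splits G
  have hcard : Multiset.card G.roots = g.natDegree := by
    have h1 := (hsplits.natDegree_eq_card_roots).symm
    rw [h1, hG, Polynomial.natDegree_map_eq_of_injective Int.cast_injective]
  have hrootsG : ∀ z ∈ G.roots, (d:ℝ) < ‖z‖ := by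
    intro z hz
    have hzr : G.IsRoot z := (Polynomial.mem_roots hGne).1 hz
    apply hroots
    obtain ⟨q, hq⟩ := hgf
    rw [Polynomial.aeval_def, ← Polynomial.eval_map, hq, Polynomial.map_mul]
    have : algebraMap ℤ ℂ = Int.castRingHom ℂ := rfl
    rw [this]
    simp [Polynomial.IsRoot.def.1 hzr]
    exact Or.inl (Polynomial.IsRoot.def.1 hzr)
  have heq := hsplits.eq_prod_roots
  have heval : G.eval 0 = G.leadingCoeff * (G.roots.map (fun a => -a)).prod := by
    conv_lhs => rw [heq]
    rw [Polynomial.eval_mul, Polynomial.eval_C, Polynomial.eval_multiset_prod]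
    congr 2
    rw [Multiset.map_map]
    congr 1
    funext a
    simp
  have hlc : (1:ℝ) ≤ ‖G.leadingCoeff‖ := by
    have : G.leadingCoeff = (g.leadingCoeff : ℂ) := by
      rw [hG]
      exact Polynomial.leadingCoeff_map_of_leadingCoeff_ne_zero _ (by
        simpa using Polynomial.leadingCoeff_ne_zero.2 hgne)
    rw [this, Complex.norm_intCast]
    have : g.leadingCoeff ≠ 0 := Polynomial.leadingCoeff_ne_zero.2 hgne
    have h1 : 1 ≤ |g.leadingCoeff| := Int.one_le_abs this
    exact_mod_cast h1
  have hprod : (d:ℝ) < ‖(G.roots.map (fun a => -a)).prod‖ := by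
    apply multiset_prod_abs_lower d hd
    · intro z hz
      rw [Multiset.mem_map] at hz
      obtain ⟨a, ha, rfl⟩ := hz
      rw [norm_neg]
      exact hrootsG a ha
    · rw [Multiset.card_map, hcard]; exact hdeg
  have hGeval : ‖(G.eval 0)‖ = ‖G.leadingCoeff‖ *
      ‖(G.roots.map (fun a => -a)).prod‖ := by rw [heval, norm_mul]
  have hfinal : (d:ℝ) < ‖(G.eval 0)‖ := by
    rw [hGeval]
    nlinarith [norm_nonneg (G.roots.map (fun a => -a)).prod]
  have hGeval0 : G.eval 0 = ((g.coeff 0 : ℤ) : ℂ) := by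
    rw [hG, Polynomial.eval_map, Polynomial.eval₂_at_zero]
    rfl
  rw [hGeval0, Complex.norm_intCast] at hfinal
  have : ((g.coeff 0).natAbs : ℝ) = |(g.coeff 0 : ℝ)| := by rw [Nat.cast_natAbs, Int.cast_abs]
  rw [← this] at hfinal
  exact_mod_cast hfinal


lemma stepB {p k d : ℕ} [hp : Fact p.Prime] (hd : 0 < d) (hpd : ¬ p ∣ d) {x y : ℤ}
    (hx : x ≠ 0) (hy : y ≠ 0)
    (hxy : x.natAbs * y.natAbs = p ^ k * d) (hxd : d < x.natAbs) (hyd : d < y.natAbs) :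
    1 ≤ padicValInt p x ∧ 1 ≤ padicValInt p y ∧ padicValInt p x + padicValInt p y = k := by
  have hxn : x.natAbs ≠ 0 := Int.natAbs_ne_zero.2 hx
  have hyn : y.natAbs ≠ 0 := Int.natAbs_ne_zero.2 hy
  have hone : ∀ z : ℤ, z ≠ 0 → z.natAbs ∣ p ^ k * d → d < z.natAbs → 1 ≤ padicValInt p z := by
    intro z hz hzdvd hlt
    by_contra hcon
    have hv0 : padicValInt p z = 0 := by omega
    have hnd : ¬ p ∣ z.natAbs := by
      intro hdvd'
      have := one_le_padicValNat_of_dvd (Int.natAbs_ne_zero.2 hz) hdvd'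
      have : padicValInt p z = padicValNat p z.natAbs := rfl
      omega
    have hcop : Nat.Coprime z.natAbs (p ^ k) :=
      (((Nat.Prime.coprime_iff_not_dvd hp.out).2 hnd).symm).pow_right k
    have hzd : z.natAbs ∣ d := hcop.dvd_of_dvd_mul_left hzdvd
    have := Nat.le_of_dvd hd hzd
    omega
  have hsum : padicValInt p x + padicValInt p y = k := by
    have h1 : padicValInt p x = padicValNat p x.natAbs := rfl
    have h2 : padicValInt p y = padicValNat p y.natAbs := rfl
    have h3 : padicValNat p (x.natAbs * y.natAbs) = padicValNat p x.natAbs +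
        padicValNat p y.natAbs := padicValNat.mul hxn hyn
    have h4 : padicValNat p (p ^ k * d) = k := by
      rw [padicValNat.mul (pow_ne_zero k hp.out.ne_zero) (by omega),
        padicValNat.prime_pow, padicValNat.eq_zero_of_not_dvd hpd]
      omega
    rw [hxy] at h3
    omega
  exact ⟨hone x hx ⟨y.natAbs, hxy.symm⟩ hxd, hone y hy ⟨x.natAbs, by rw [← hxy, Nat.mul_comm]⟩ hyd,
    hsum⟩

theorem stmt1 (f : Polynomial ℤ) (d k p j : ℕ) (hd : 0 < d) (hk : 0 < k)
    (hp : p.Prime) (hpd : ¬ (p : ℤ) ∣ (d : ℤ))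
    (hprim : f.IsPrimitive)
    (h0 : f.coeff 0 = (p : ℤ) ^ k * d ∨ f.coeff 0 = -((p : ℤ) ^ k * d))
    (hj1 : 1 ≤ j) (hjn : j ≤ f.natDegree)
    (hgcd : Nat.gcd k j = 1)
    (hdvd : ∀ i < j, (p : ℤ) ^ k ∣ f.coeff i)
    (hk1 : 1 < k → ¬ (p : ℤ) ∣ f.coeff j)
    (hroots : ∀ θ : ℂ, Polynomial.aeval θ f = 0 → (d : ℝ) < ‖θ‖) :
    Irreducible f := by
  haveI : Fact p.Prime := ⟨hp⟩
  have hpdn : ¬ p ∣ d := fun hc => hpd (by exact_mod_cast hc)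
  have hf0abs : (f.coeff 0).natAbs = p ^ k * d := by
    rcases h0 with h | h <;>
      simp [h, Int.natAbs_mul, Int.natAbs_pow]
  have hf0 : f.coeff 0 ≠ 0 := by
    intro hc
    have h1 : (0:ℤ).natAbs = 0 := rfl
    rw [hc, h1] at hf0abs
    have h2 : 0 < p ^ k := pow_pos hp.pos k
    have h3 := Nat.mul_pos h2 hd
    omega
  have hfne : f ≠ 0 := fun hc => hf0 (by simp [hc])
  constructor
  · intro hu
    have := Polynomial.natDegree_eq_zero_of_isUnit hu
    omega
  · rintro g1 g2 hf
    by_cases hg1d : g1.natDegree = 0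
    · left
      obtain ⟨c, rfl⟩ := Polynomial.natDegree_eq_zero.1 hg1d
      exact Polynomial.isUnit_C.2 (hprim _ ⟨g2, hf⟩)
    by_cases hg2d : g2.natDegree = 0
    · right
      obtain ⟨c, rfl⟩ := Polynomial.natDegree_eq_zero.1 hg2d
      exact Polynomial.isUnit_C.2 (hprim _ ⟨g1, by rw [hf, mul_comm]⟩)
    exfalso
    have hg1deg : 1 ≤ g1.natDegree := by omega
    have hg2deg : 1 ≤ g2.natDegree := by omega
    have hcoeff0 : g1.coeff 0 * g2.coeff 0 = f.coeff 0 := by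
      rw [hf, Polynomial.mul_coeff_zero]
    have hg10 : g1.coeff 0 ≠ 0 := fun hc => hf0 (by rw [← hcoeff0, hc, zero_mul])
    have hg20 : g2.coeff 0 ≠ 0 := fun hc => hf0 (by rw [← hcoeff0, hc, mul_zero])
    have hnatabs : (g1.coeff 0).natAbs * (g2.coeff 0).natAbs = p ^ k * d := by
      rw [← Int.natAbs_mul, hcoeff0, hf0abs]
    have hA1 := stepA d hd f g1 hfne ⟨g2, hf⟩ hg1deg hroots
    have hA2 := stepA d hd f g2 hfne ⟨g1, by rw [hf, mul_comm]⟩ hg2deg hroots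
    obtain ⟨ha1, hb1, hab⟩ := stepB hd hpdn hg10 hg20 hnatabs hA1 hA2
    have hk2 : 1 < k := by omega
    exact stepC hk hj1 hgcd g1 g2 hg10 hg20 ha1 hb1 hab
      (fun i hi => by rw [← hf]; exact hdvd i hi)
      (by rw [← hf]; exact hk1 hk2)
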